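/- Let X be a real random variable with the normal distribution of mean μ ∈ ℝ and variance σ² with σ > 0, and let f* ∈ ℝ. Then the expected improvement E[(X − f*)⁺] = E[max(X − f*, 0)] equals (μ − f*) Φ((μ − f*)/σ) + σ φ((μ − f*)/σ), where φ is the standard normal probability density function and Φ is the standard normal cumulative distribution function. -/

import Mathlib

open ProbabilityTheory

/-- The standard normal probability density function. -/
noncomputable def stdNormalPdf (z : ℝ) : ℝ :=
  (2 * Real.pi) ^ (-(1 : ℝ) / 2) * Real.exp (-z ^ 2 / 2)

/-- The standard normal cumulative distribution function. -/
noncomputable def stdNormalCdf (z : ℝ) : ℝ :=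
  ∫ t in Set.Iic z, stdNormalPdf t

lemma stdNormalPdf_eq_gauss : stdNormalPdf = gaussianPDFReal 0 1 := by
  funext x
  rw [stdNormalPdf, gaussianPDFReal]
  have h2π : (0:ℝ) ≤ 2 * Real.pi := by positivity
  simp only [NNReal.coe_one, mul_one, sub_zero]
  rw [Real.sqrt_eq_rpow, ← Real.rpow_neg h2π]
  norm_num

lemma stdNormalPdf_neg (x : ℝ) : stdNormalPdf (-x) = stdNormalPdf x := by
  simp [stdNormalPdf]

lemma integrable_stdNormalPdf : MeasureTheory.Integrable stdNormalPdf := by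
  rw [stdNormalPdf_eq_gauss]; exact ProbabilityTheory.integrable_gaussianPDFReal 0 1

lemma integrable_mul_stdNormalPdf : MeasureTheory.Integrable (fun t => t * stdNormalPdf t) := by
  have h := (integrable_mul_exp_neg_mul_sq (by norm_num : (0:ℝ) < 1/2)).const_mul
    ((2 * Real.pi) ^ (-(1 : ℝ) / 2))
  refine h.congr (MeasureTheory.ae_of_all _ fun x => ?_)
  simp only [stdNormalPdf]
  ring_nf

lemma integral_Ioi_mul_stdNormalPdf (c : ℝ) :
    ∫ t in Set.Ioi c, t * stdNormalPdf t = stdNormalPdf c := by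
  have hd : ∀ x ∈ Set.Ici c, HasDerivAt (fun t => -stdNormalPdf t) (x * stdNormalPdf x) x := by
    intro x _
    have h1 : HasDerivAt (fun t : ℝ => -t ^ 2 / 2) (-x) x := by
      have := ((hasDerivAt_pow 2 x).neg).div_const 2
      convert this using 1
      · rfl
      · rfl
      · rfl
      · simp; ring
    have h2 := (h1.exp).const_mul ((2 * Real.pi) ^ (-(1 : ℝ) / 2))
    have h3 := h2.neg
    convert h3 using 1
    · rfl
    · rfl
    · rfl
    · simp [stdNormalPdf]; ring
  have hint : MeasureTheory.IntegrableOn (fun t => t * stdNormalPdf t) (Set.Ioi c) :=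
    integrable_mul_stdNormalPdf.integrableOn
  have htend : Filter.Tendsto (fun t => -stdNormalPdf t) Filter.atTop (nhds 0) := by
    rw [show (0:ℝ) = -((2 * Real.pi) ^ (-(1 : ℝ) / 2) * 0) by simp]
    refine (Filter.Tendsto.const_mul _ ?_).neg
    refine Real.tendsto_exp_atBot.comp ?_
    apply Filter.Tendsto.atBot_div_const (by norm_num : (0:ℝ) < 2)
    exact Filter.tendsto_neg_atTop_atBot.comp (Filter.tendsto_pow_atTop two_ne_zero)
  have := MeasureTheory.integral_Ioi_of_hasDerivAt_of_tendsto' hd hint htend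
  rw [this]; simp

lemma integral_Ioi_stdNormalPdf (c : ℝ) :
    ∫ t in Set.Ioi c, stdNormalPdf t = stdNormalCdf (-c) := by
  rw [stdNormalCdf, ← integral_comp_neg_Ioi]
  simp [stdNormalPdf_neg]

/-- The expected improvement formula: if `X` is normally distributed with mean `μ` and
variance `σ²`, then `E[(X - f*)⁺] = (μ - f*) Φ((μ - f*)/σ) + σ φ((μ - f*)/σ)`. -/
theorem stmt4 (μ fstar σ : ℝ) (hσ : 0 < σ) :
    ∫ z, max (z - fstar) 0 ∂(gaussianReal μ ⟨σ ^ 2, sq_nonneg σ⟩)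
      = (μ - fstar) * stdNormalCdf ((μ - fstar) / σ) + σ * stdNormalPdf ((μ - fstar) / σ) := by
  set a : ℝ := μ - fstar with ha
  -- Step A : measure as pushforward of standard gaussian
  have hmap : gaussianReal μ ⟨σ ^ 2, sq_nonneg σ⟩
      = (gaussianReal 0 1).map (fun t => σ * t + μ) := by
    have hcomp : (fun t : ℝ => σ * t + μ) = (fun x : ℝ => x + μ) ∘ (fun x : ℝ => σ * x) := rfl
    rw [hcomp, ← MeasureTheory.Measure.map_map (measurable_add_const μ)
      (measurable_const_mul σ)]
    rw [gaussianReal_map_const_mul (μ := 0) (v := 1) σ, gaussianReal_map_add_const μ]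
    congr 1 <;> simp <;> rfl
  rw [hmap, MeasureTheory.integral_map (f := fun z => max (z - fstar) 0) (by fun_prop)
    (Continuous.aestronglyMeasurable (by continuity))]
  -- Step B : standard gaussian as density over Lebesgue
  rw [gaussianReal_of_var_ne_zero 0 one_ne_zero]
  have hpdf : gaussianPDF 0 1 = fun x => ((gaussianPDFReal 0 1 x).toNNReal : ENNReal) := rfl
  rw [hpdf, integral_withDensity_eq_integral_smul
    ((measurable_gaussianPDFReal 0 1).real_toNNReal) _]
  have hsmul : ∀ t : ℝ, (gaussianPDFReal 0 1 t).toNNReal • max (σ * t + μ - fstar) 0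
      = stdNormalPdf t * max (σ * t + a) 0 := by
    intro t
    rw [NNReal.smul_def, Real.coe_toNNReal _ (gaussianPDFReal_nonneg 0 1 t),
      ← stdNormalPdf_eq_gauss, ha, smul_eq_mul]
    ring_nf
  simp_rw [hsmul]
  -- Step C : indicator form
  set c : ℝ := -(a / σ) with hc
  have hind : (fun t => stdNormalPdf t * max (σ * t + a) 0)
      = Set.indicator (Set.Ioi c) (fun t => σ * (t * stdNormalPdf t) + a * stdNormalPdf t) := by
    funext t
    have key : σ * c = -a := by rw [hc]; field_simp
    by_cases ht : t ∈ Set.Ioi c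
    · rw [Set.indicator_of_mem ht]
      have h2 : σ * c < σ * t := (mul_lt_mul_iff_right₀ hσ).2 ht
      have h1 : 0 < σ * t + a := by linarith
      rw [max_eq_left h1.le]; ring
    · rw [Set.indicator_of_notMem ht]
      simp only [Set.mem_Ioi, not_lt] at ht
      have h2 : σ * t ≤ σ * c := (mul_le_mul_iff_right₀ hσ).2 ht
      have h1 : σ * t + a ≤ 0 := by linarith
      rw [max_eq_right h1]; ring
  rw [hind, MeasureTheory.integral_indicator measurableSet_Ioi]
  rw [MeasureTheory.integral_add ((integrable_mul_stdNormalPdf.const_mul σ).integrableOn)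
    ((integrable_stdNormalPdf.const_mul a).integrableOn),
    MeasureTheory.integral_const_mul, MeasureTheory.integral_const_mul,
    integral_Ioi_mul_stdNormalPdf, integral_Ioi_stdNormalPdf]
  rw [hc, neg_neg, show stdNormalPdf (-(a/σ)) = stdNormalPdf (a/σ) from stdNormalPdf_neg _]
  ring
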